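/- For every even integer j ≥ 2 and real x with |x| < 1, ∫₀^π θ sin θ / (1 + x^j cos^j θ) dθ = π · ∑_{n=0}^∞ (−1)^n x^{jn}/(jn + 1). -/

import Mathlib

open Real MeasureTheory intervalIntegral

theorem stmt_19 (j : ℕ) (hj : 2 ≤ j) (hje : Even j) (x : ℝ) (hx : |x| < 1) :
    ∫ θ in (0:ℝ)..Real.pi, θ * Real.sin θ / (1 + x ^ j * Real.cos θ ^ j)
      = Real.pi * ∑' n : ℕ, (-1 : ℝ) ^ n * x ^ (j * n) / (j * n + 1) := by
  have hj0 : j ≠ 0 := by omega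
  have hxj : |x| ^ j < 1 := pow_lt_one₀ (abs_nonneg x) hx hj0
  have hxj0 : (0:ℝ) ≤ |x| ^ j := pow_nonneg (abs_nonneg x) j
  have hden : ∀ c : ℝ, 0 < 1 + x ^ j * c ^ j := by
    intro c
    have h0 : 0 ≤ x ^ j * c ^ j := by rw [← mul_pow]; exact hje.pow_nonneg _
    linarith
  have hg : Continuous (fun u : ℝ => 1 / (1 + x ^ j * u ^ j)) := by
    apply Continuous.div continuous_const (by continuity)
    intro u; exact (hden u).ne'
  have hcont1 : Continuous fun θ : ℝ => θ * Real.sin θ / (1 + x ^ j * Real.cos θ ^ j) := by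
    apply Continuous.div (by continuity) (by continuity)
    intro θ; exact (hden (Real.cos θ)).ne'
  have hcont2 : Continuous fun θ : ℝ =>
      (Real.pi - θ) * Real.sin θ / (1 + x ^ j * Real.cos θ ^ j) := by
    apply Continuous.div (by continuity) (by continuity)
    intro θ; exact (hden (Real.cos θ)).ne'
  -- symmetry step
  have sym : ∫ θ in (0:ℝ)..Real.pi,
        (Real.pi - θ) * Real.sin θ / (1 + x ^ j * Real.cos θ ^ j)
      = ∫ θ in (0:ℝ)..Real.pi, θ * Real.sin θ / (1 + x ^ j * Real.cos θ ^ j) := by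
    have h := intervalIntegral.integral_comp_sub_left (a := 0) (b := Real.pi)
      (fun θ => θ * Real.sin θ / (1 + x ^ j * Real.cos θ ^ j)) Real.pi
    simp only [sub_self, sub_zero] at h
    rw [← h]
    congr 1; ext θ
    rw [Real.sin_pi_sub, Real.cos_pi_sub, hje.neg_pow]
  have key : (2:ℝ) * (∫ θ in (0:ℝ)..Real.pi, θ * Real.sin θ / (1 + x ^ j * Real.cos θ ^ j))
      = Real.pi * ∫ θ in (0:ℝ)..Real.pi, Real.sin θ / (1 + x ^ j * Real.cos θ ^ j) := by
    have hadd : (∫ θ in (0:ℝ)..Real.pi,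
          ((Real.pi - θ) * Real.sin θ / (1 + x ^ j * Real.cos θ ^ j)
            + θ * Real.sin θ / (1 + x ^ j * Real.cos θ ^ j)))
        = (∫ θ in (0:ℝ)..Real.pi, (Real.pi - θ) * Real.sin θ / (1 + x ^ j * Real.cos θ ^ j))
          + ∫ θ in (0:ℝ)..Real.pi, θ * Real.sin θ / (1 + x ^ j * Real.cos θ ^ j) :=
      intervalIntegral.integral_add (hcont2.intervalIntegrable _ _)
        (hcont1.intervalIntegrable _ _)
    have hsimp : (∫ θ in (0:ℝ)..Real.pi,
          ((Real.pi - θ) * Real.sin θ / (1 + x ^ j * Real.cos θ ^ j)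
            + θ * Real.sin θ / (1 + x ^ j * Real.cos θ ^ j)))
        = Real.pi * ∫ θ in (0:ℝ)..Real.pi, Real.sin θ / (1 + x ^ j * Real.cos θ ^ j) := by
      rw [← intervalIntegral.integral_const_mul]
      congr 1; ext θ
      have : (Real.pi - θ) * Real.sin θ + θ * Real.sin θ = Real.pi * Real.sin θ := by ring
      rw [← add_div, this, mul_div_assoc]
    rw [← hsimp, hadd, sym]; ring
  -- substitution step
  have sub : ∫ θ in (0:ℝ)..Real.pi, Real.sin θ / (1 + x ^ j * Real.cos θ ^ j)
      = ∫ u in (-1:ℝ)..1, 1 / (1 + x ^ j * u ^ j) := by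
    have h := intervalIntegral.integral_comp_smul_deriv (a := 0) (b := Real.pi)
      (f := Real.cos) (f' := fun θ => -Real.sin θ)
      (g := fun u => 1 / (1 + x ^ j * u ^ j))
      (fun θ _ => Real.hasDerivAt_cos θ) (Real.continuous_sin.neg.continuousOn) hg
    rw [Real.cos_zero, Real.cos_pi] at h
    have hL : (∫ θ in (0:ℝ)..Real.pi,
          (-Real.sin θ) • ((fun u => 1 / (1 + x ^ j * u ^ j)) ∘ Real.cos) θ)
        = - ∫ θ in (0:ℝ)..Real.pi, Real.sin θ / (1 + x ^ j * Real.cos θ ^ j) := by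
      rw [← intervalIntegral.integral_neg]
      congr 1; ext θ
      simp [Function.comp, smul_eq_mul]
      ring
    rw [hL, intervalIntegral.integral_symm (-1) 1] at h
    linarith [h]
  -- per-term integral
  have hterm : ∀ n : ℕ, ∫ u in (-1:ℝ)..1, (-(x ^ j)) ^ n * u ^ (j * n)
      = (-(x ^ j)) ^ n * (2 / (j * n + 1)) := by
    intro n
    rw [intervalIntegral.integral_const_mul, integral_pow]
    congr 1
    have he : Even (j * n) := hje.mul_right n
    have ho : Odd (j * n + 1) := he.add_one
    rw [one_pow, ho.neg_one_pow]
    push_cast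
    ring
  -- swap integral and sum
  have swap : ∫ u in (-1:ℝ)..1, 1 / (1 + x ^ j * u ^ j)
      = ∑' n : ℕ, ∫ u in (-1:ℝ)..1, (-(x ^ j)) ^ n * u ^ (j * n) := by
    have hle : (-1:ℝ) ≤ 1 := by norm_num
    have hmeas : ∀ n : ℕ, AEStronglyMeasurable (fun u : ℝ => (-(x ^ j)) ^ n * u ^ (j * n))
        (volume.restrict (Set.Ioc (-1:ℝ) 1)) := by
      intro n; exact (Continuous.aestronglyMeasurable (by continuity))
    have hbound : ∑' n : ℕ,
        ∫⁻ u in Set.Ioc (-1:ℝ) 1, ‖(-(x ^ j)) ^ n * u ^ (j * n)‖₊ ≠ ⊤ := by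
      have h1 : ∀ n : ℕ, (∫⁻ u in Set.Ioc (-1:ℝ) 1, ‖(-(x ^ j)) ^ n * u ^ (j * n)‖₊)
          ≤ ENNReal.ofReal ((|x| ^ j) ^ n) * 2 := by
        intro n
        calc (∫⁻ u in Set.Ioc (-1:ℝ) 1, ‖(-(x ^ j)) ^ n * u ^ (j * n)‖₊)
            ≤ ∫⁻ _ in Set.Ioc (-1:ℝ) 1, ENNReal.ofReal ((|x| ^ j) ^ n) := by
              apply setLIntegral_mono measurable_const
              intro u hu
              rw [← enorm_eq_nnnorm, Real.enorm_eq_ofReal_abs]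
              apply ENNReal.ofReal_le_ofReal
              have hu1 : |u| ≤ 1 := abs_le.mpr ⟨hu.1.le, hu.2⟩
              have : |(-(x ^ j)) ^ n * u ^ (j * n)|
                  = (|x| ^ j) ^ n * |u| ^ (j * n) := by
                rw [abs_mul, abs_pow, abs_pow, abs_neg, abs_pow]
              rw [this]
              have h2 : |u| ^ (j * n) ≤ 1 := pow_le_one₀ (abs_nonneg u) hu1
              have h3 : (0:ℝ) ≤ (|x| ^ j) ^ n := pow_nonneg hxj0 n
              nlinarith
          _ = ENNReal.ofReal ((|x| ^ j) ^ n) * volume (Set.Ioc (-1:ℝ) 1) :=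
              setLIntegral_const _ _
          _ = ENNReal.ofReal ((|x| ^ j) ^ n) * 2 := by
              rw [Real.volume_Ioc]
              norm_num
      have h2 : ∑' n : ℕ, ENNReal.ofReal ((|x| ^ j) ^ n) * 2 ≠ ⊤ := by
        rw [ENNReal.tsum_mul_right]
        have : ∑' n : ℕ, ENNReal.ofReal ((|x| ^ j) ^ n)
            = ENNReal.ofReal (∑' n : ℕ, (|x| ^ j) ^ n) :=
          (ENNReal.ofReal_tsum_of_nonneg (fun n => pow_nonneg hxj0 n)
            (summable_geometric_of_lt_one hxj0 hxj)).symm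
        rw [this]
        exact ENNReal.mul_ne_top ENNReal.ofReal_ne_top (by norm_num)
      exact ne_top_of_le_ne_top h2 (ENNReal.tsum_le_tsum h1)
    have hpt : Set.EqOn (fun u : ℝ => 1 / (1 + x ^ j * u ^ j))
        (fun u : ℝ => ∑' n : ℕ, (-(x ^ j)) ^ n * u ^ (j * n)) (Set.Ioc (-1:ℝ) 1) := by
      intro u hu
      have hu1 : |u| ≤ 1 := abs_le.mpr ⟨hu.1.le, hu.2⟩
      have hnorm : ‖-(x ^ j * u ^ j)‖ < 1 := by
        rw [Real.norm_eq_abs, abs_neg, abs_mul, abs_pow, abs_pow]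
        calc |x| ^ j * |u| ^ j ≤ |x| ^ j * 1 := by
              exact mul_le_mul_of_nonneg_left (pow_le_one₀ (abs_nonneg u) hu1) hxj0
          _ < 1 := by rwa [mul_one]
      have hgeo := tsum_geometric_of_norm_lt_one hnorm
      have heq : ∀ n : ℕ, (-(x ^ j * u ^ j)) ^ n = (-(x ^ j)) ^ n * u ^ (j * n) := by
        intro n
        rw [pow_mul, ← mul_pow]
        congr 1; ring
      simp only [heq] at hgeo
      simp only []
      rw [hgeo, sub_neg_eq_add, one_div]
    rw [intervalIntegral.integral_of_le hle, setIntegral_congr_fun measurableSet_Ioc hpt,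
      MeasureTheory.integral_tsum hmeas hbound]
    exact tsum_congr fun n => (intervalIntegral.integral_of_le hle).symm
  -- final assembly
  have hsum : ∑' n : ℕ, (-(x ^ j)) ^ n * (2 / (j * n + 1))
      = 2 * ∑' n : ℕ, (-1:ℝ) ^ n * x ^ (j * n) / (j * n + 1) := by
    rw [← tsum_mul_left]
    apply tsum_congr
    intro n
    rw [neg_pow, pow_mul]
    ring
  rw [sub, swap, tsum_congr hterm, hsum] at key
  linarith [key]
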